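/- Let (S_n) be a sequence of real random variables with E S_n^4 ≤ 4τ² E S_n² + 3(E S_n²)² for a fixed τ > 0, E S_n² < ∞, and suppose S_n → 0 in probability. Then E S_n² → 0. -/

import Mathlib

open MeasureTheory ProbabilityTheory Filter
open scoped ENNReal

lemma my_sqrt_add_le (x y : ℝ) (hx : 0 ≤ x) (hy : 0 ≤ y) :
    Real.sqrt (x + y) ≤ Real.sqrt x + Real.sqrt y := by
  rw [show x + y = Real.sqrt x ^ 2 + Real.sqrt y ^ 2 by
    rw [Real.sq_sqrt hx, Real.sq_sqrt hy]]
  nlinarith [Real.sqrt_nonneg x, Real.sqrt_nonneg y,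
    Real.sqrt_le_sqrt (show Real.sqrt x ^ 2 + Real.sqrt y ^ 2 ≤ (Real.sqrt x + Real.sqrt y)^2 by
      nlinarith [Real.sqrt_nonneg x, Real.sqrt_nonneg y]),
    Real.sqrt_sq (by positivity : (0:ℝ) ≤ Real.sqrt x + Real.sqrt y)]

lemma my_key {Ω : Type*} [MeasureSpace Ω] [IsProbabilityMeasure (ℙ : Measure Ω)]
    (f : Ω → ℝ) (hm : Measurable f) (hf : MemLp f 4 ℙ) (c : ℝ) (hc : 0 < c) :
    ∫ ω, f ω ^ 2 ∂ℙ ≤ c ^ 2 +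
      Real.sqrt ((∫ ω, f ω ^ 4 ∂ℙ) * (ℙ {ω | c ≤ |f ω|}).toReal) := by
  set A : Set Ω := {ω | c ≤ |f ω|} with hA
  have hAmeas : MeasurableSet A := measurableSet_le measurable_const hm.abs
  have int4 : Integrable (fun ω => f ω ^ 4) ℙ := by
    have := hf.integrable_norm_rpow (by norm_num) (by norm_num)
    simp only [ENNReal.toReal_ofNat, Real.rpow_natCast, Real.norm_eq_abs] at this
    exact this.congr (ae_of_all _ fun x => by
      show |f x| ^ (4:ℝ) = f x ^ 4
      rw [show (4:ℝ) = ((4:ℕ):ℝ) by norm_num, Real.rpow_natCast]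
      exact Even.pow_abs (⟨2, rfl⟩ : Even 4) (f x))
  have int2 : Integrable (fun ω => f ω ^ 2) ℙ :=
    (MemLp.mono_exponent hf (by norm_num : (2:ℝ≥0∞) ≤ 4)).integrable_sq
  have hsq2 : MemLp (fun ω => f ω ^ 2) 2 ℙ := by
    rw [memLp_two_iff_integrable_sq ((hm.pow_const 2).aestronglyMeasurable)]
    simpa [← pow_mul] using int4
  have hind : MemLp (A.indicator (fun _ => (1:ℝ))) 2 ℙ :=
    memLp_indicator_const 2 hAmeas 1 (Or.inr (measure_ne_top _ _))
  have hpq : (2:ℝ).HolderConjugate 2 := Real.holderConjugate_iff.mpr ⟨one_lt_two, by norm_num⟩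
  have h2 : ENNReal.ofReal (2:ℝ) = 2 := by norm_num [ENNReal.ofReal_ofNat]
  have hCS := integral_mul_le_Lp_mul_Lq_of_nonneg hpq
    (ae_of_all _ fun x => sq_nonneg (f x))
    (ae_of_all _ fun x => Set.indicator_nonneg (fun _ _ => zero_le_one) x)
    (h2 ▸ hsq2) (h2 ▸ hind)
  -- rewrite the pieces of hCS
  have e1 : ∫ a, f a ^ 2 * A.indicator (fun _ => (1:ℝ)) a ∂ℙ = ∫ x in A, f x ^ 2 ∂ℙ := by
    rw [← integral_indicator hAmeas]
    refine integral_congr_ae (ae_of_all _ fun x => ?_)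
    by_cases hx : x ∈ A <;> simp [Set.indicator_apply, hx]
  have e2 : ∫ a, (f a ^ 2) ^ (2:ℝ) ∂ℙ = ∫ ω, f ω ^ 4 ∂ℙ := by
    refine integral_congr_ae (ae_of_all _ fun x => ?_)
    show (f x ^ 2) ^ (2:ℝ) = f x ^ 4
    rw [show (2:ℝ) = ((2:ℕ):ℝ) by norm_num, Real.rpow_natCast, ← pow_mul]
  have e3 : ∫ a, (A.indicator (fun _ => (1:ℝ)) a) ^ (2:ℝ) ∂ℙ = (ℙ A).toReal := by
    have : ∀ a, (A.indicator (fun _ => (1:ℝ)) a) ^ (2:ℝ) = A.indicator (fun _ => (1:ℝ)) a := by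
      intro a
      by_cases hx : a ∈ A <;> simp [Set.indicator_apply, hx, Real.rpow_natCast]
    rw [integral_congr_ae (ae_of_all _ this), integral_indicator_const (1:ℝ) hAmeas]
    simp [Measure.real]
  rw [e1, e2, e3] at hCS
  have hsqrt : (∫ ω, f ω ^ 4 ∂ℙ) ^ ((1:ℝ)/2) * (ℙ A).toReal ^ ((1:ℝ)/2)
      = Real.sqrt ((∫ ω, f ω ^ 4 ∂ℙ) * (ℙ A).toReal) := by
    rw [Real.sqrt_eq_rpow, Real.mul_rpow (integral_nonneg fun ω => by positivity)
      ENNReal.toReal_nonneg]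
  rw [hsqrt] at hCS
  have hcomp : ∫ x in Aᶜ, f x ^ 2 ∂ℙ ≤ c ^ 2 := by
    have hle : ∫ x in Aᶜ, f x ^ 2 ∂ℙ ≤ ∫ x in Aᶜ, c ^ 2 ∂ℙ := by
      refine setIntegral_mono_on int2.integrableOn
        (integrableOn_const (measure_ne_top _ _)) hAmeas.compl fun x hx => ?_
      have hxc : |f x| < c := not_le.1 hx
      nlinarith [abs_nonneg (f x), sq_abs (f x)]
    refine hle.trans ?_
    rw [setIntegral_const, smul_eq_mul]
    have h1 : (ℙ Aᶜ).toReal ≤ 1 := by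
      simpa using ENNReal.toReal_mono ENNReal.one_ne_top prob_le_one
    nlinarith [sq_nonneg c, show (ℙ : Measure Ω).real Aᶜ = (ℙ Aᶜ).toReal from rfl]
  have hsplit : ∫ ω, f ω ^ 2 ∂ℙ = (∫ x in A, f x ^ 2 ∂ℙ) + ∫ x in Aᶜ, f x ^ 2 ∂ℙ :=
    (integral_add_compl hAmeas int2).symm
  rw [hsplit]
  have := add_le_add hCS hcomp
  linarith


/-- If `E Sₙ⁴ ≤ 4τ² E Sₙ² + 3 (E Sₙ²)²` for a fixed `τ > 0`, the `Sₙ` have finite fourth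
moments, and `Sₙ → 0` in probability, then `E Sₙ² → 0`. -/
theorem stmt2 {Ω : Type*} [MeasureSpace Ω] [IsProbabilityMeasure (ℙ : Measure Ω)]
    (S : ℕ → Ω → ℝ) (τ : ℝ) (hτ : 0 < τ)
    (hmeas : ∀ n, Measurable (S n))
    (hL4 : ∀ n, MemLp (S n) 4 ℙ)
    (hmom : ∀ n, ∫ ω, (S n ω) ^ 4 ∂ℙ ≤
      4 * τ ^ 2 * ∫ ω, (S n ω) ^ 2 ∂ℙ + 3 * (∫ ω, (S n ω) ^ 2 ∂ℙ) ^ 2)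
    (hprob : TendstoInMeasure ℙ S atTop (0 : Ω → ℝ)) :
    Tendsto (fun n => ∫ ω, (S n ω) ^ 2 ∂ℙ) atTop (nhds 0) := by
  rw [NormedAddCommGroup.tendsto_nhds_zero]
  intro ε hε
  set c : ℝ := Real.sqrt (ε / 8) with hcdef
  have hc : 0 < c := Real.sqrt_pos.2 (by positivity)
  have hc2 : c ^ 2 = ε / 8 := Real.sq_sqrt (by positivity)
  have hδpos : (0:ℝ≥0∞) < ENNReal.ofReal (min (1/12) (ε / (64 * τ ^ 2))) := by
    rw [ENNReal.ofReal_pos]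
    exact lt_min (by norm_num) (by positivity)
  have hev := (tendstoInMeasure_iff_dist.1 hprob c hc).eventually (gt_mem_nhds hδpos)
  filter_upwards [hev] with n hn
  simp only [Pi.zero_apply, Real.dist_eq, sub_zero] at hn
  set m : ℝ := ∫ ω, S n ω ^ 2 ∂ℙ with hmdef
  set P : ℝ := (ℙ {ω | c ≤ |S n ω|}).toReal with hPdef
  have hPlt : P < min (1/12) (ε / (64 * τ ^ 2)) :=
    ENNReal.toReal_lt_of_lt_ofReal hn
  have hP1 : P ≤ 1/12 := (lt_min_iff.1 hPlt).1.le
  have hP2 : P ≤ ε / (64 * τ ^ 2) := (lt_min_iff.1 hPlt).2.le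
  have hP0 : 0 ≤ P := ENNReal.toReal_nonneg
  have hm0 : 0 ≤ m := integral_nonneg fun ω => sq_nonneg _
  have hE40 : 0 ≤ ∫ ω, S n ω ^ 4 ∂ℙ :=
    integral_nonneg fun ω => by positivity
  have hkey := my_key (S n) (hmeas n) (hL4 n) c hc
  -- bound the sqrt term
  have h1 : Real.sqrt ((∫ ω, S n ω ^ 4 ∂ℙ) * P)
      ≤ Real.sqrt (4 * τ ^ 2 * m * P + 3 * m ^ 2 * P) := by
    apply Real.sqrt_le_sqrt
    calc (∫ ω, S n ω ^ 4 ∂ℙ) * P ≤ (4 * τ ^ 2 * m + 3 * m ^ 2) * P :=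
          mul_le_mul_of_nonneg_right (hmom n) hP0
      _ = 4 * τ ^ 2 * m * P + 3 * m ^ 2 * P := by ring
  have h2 : Real.sqrt (4 * τ ^ 2 * m * P + 3 * m ^ 2 * P)
      ≤ Real.sqrt (4 * τ ^ 2 * m * P) + Real.sqrt (3 * m ^ 2 * P) :=
    my_sqrt_add_le _ _ (by positivity) (by positivity)
  have h3 : Real.sqrt (4 * τ ^ 2 * m * P) ≤ m / 4 + 4 * τ ^ 2 * P := by
    have hb : 4 * τ ^ 2 * m * P ≤ (m / 4 + 4 * τ ^ 2 * P) ^ 2 := by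
      nlinarith [sq_nonneg (m / 4 - 4 * τ ^ 2 * P)]
    calc Real.sqrt (4 * τ ^ 2 * m * P) ≤ Real.sqrt ((m / 4 + 4 * τ ^ 2 * P) ^ 2) :=
          Real.sqrt_le_sqrt hb
      _ = m / 4 + 4 * τ ^ 2 * P := Real.sqrt_sq (by positivity)
  have h4 : Real.sqrt (3 * m ^ 2 * P) ≤ m / 2 := by
    have hb : 3 * m ^ 2 * P ≤ (m / 2) ^ 2 := by nlinarith
    calc Real.sqrt (3 * m ^ 2 * P) ≤ Real.sqrt ((m / 2) ^ 2) := Real.sqrt_le_sqrt hb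
      _ = m / 2 := Real.sqrt_sq (by positivity)
  have hτP : 4 * τ ^ 2 * P ≤ ε / 16 := by
    have := mul_le_mul_of_nonneg_left hP2 (by positivity : (0:ℝ) ≤ 4 * τ ^ 2)
    calc 4 * τ ^ 2 * P ≤ 4 * τ ^ 2 * (ε / (64 * τ ^ 2)) := this
      _ = ε / 16 := by field_simp; ring
  have hmε : m < ε := by
    have : m ≤ c ^ 2 + (m / 4 + 4 * τ ^ 2 * P + m / 2) := by
      calc m ≤ c ^ 2 + Real.sqrt ((∫ ω, S n ω ^ 4 ∂ℙ) * P) := hkey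
        _ ≤ c ^ 2 + (m / 4 + 4 * τ ^ 2 * P + m / 2) := by
            have := (h1.trans h2).trans (add_le_add h3 h4)
            linarith
    rw [hc2] at this
    linarith
  simpa [Real.norm_of_nonneg hm0] using hmε
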